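/- Let w, ŵ ∈ ℝ^N with ‖w‖₀ = s, and let q = min{|w_i| : w_i ≠ 0}. If ‖w - ŵ‖₂² < q²/2, then the support of H_s(ŵ) equals the support of w, where H_s is the hard threshold operator keeping the s largest (in absolute value) coefficients (keeping all tying coefficients in case of ties). -/

import Mathlib

open Finset

attribute [local instance] Classical.propDecidable

/-- Hard threshold operator: keeps coordinate `i` iff fewer than `s` coordinates
have strictly larger absolute value (so all coordinates tying at the threshold are kept). -/
noncomputable def hardThr {N : Nat} (s : Nat) (x : Fin N → ℝ) : Fin N → ℝ :=
  fun i => if (Finset.univ.filter (fun j => |x j| > |x i|)).card < s then x i else 0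

/-- Support of a vector as a finite set of indices. -/
noncomputable def spt {N : Nat} (x : Fin N → ℝ) : Finset (Fin N) :=
  Finset.univ.filter (fun i => x i ≠ 0)

theorem stmt0 {N s : ℕ} (w wh : Fin N → ℝ) (q : ℝ)
    (hs : (spt w).card = s)
    (hq1 : ∀ i, w i ≠ 0 → q ≤ |w i|) (hq2 : ∃ i, w i ≠ 0 ∧ |w i| = q)
    (herr : ∑ i, (w i - wh i) ^ 2 < q ^ 2 / 2) :
    spt (hardThr s wh) = spt w := by
  have hq0 : 0 < q := by
    obtain ⟨i, hi, hqi⟩ := hq2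
    rw [← hqi]; exact abs_pos.mpr hi
  have hsum_le : ∀ S : Finset (Fin N), ∑ i ∈ S, (w i - wh i)^2 ≤ ∑ i, (w i - wh i)^2 :=
    fun S => Finset.sum_le_sum_of_subset_of_nonneg (Finset.subset_univ S)
      (fun i _ _ => sq_nonneg _)
  -- every coordinate in the support of w has nonzero wh
  have hnz : ∀ i, w i ≠ 0 → wh i ≠ 0 := by
    intro i hi hwh
    have h1 : (w i - wh i)^2 ≤ ∑ k, (w k - wh k)^2 := by
      have := hsum_le {i}
      simpa using this
    have hq : q ≤ |w i| := hq1 i hi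
    have : q^2 ≤ (w i)^2 := by
      rw [← sq_abs (w i)]
      exact pow_le_pow_left₀ hq0.le hq 2
    rw [hwh] at h1
    nlinarith
  have key : ∀ i j, w i ≠ 0 → w j = 0 → |wh j| < |wh i| := by
    intro i j hi hj
    by_contra h
    push_neg at h
    have hij : i ≠ j := fun e => hi (e ▸ hj)
    have hpair : (w i - wh i)^2 + (w j - wh j)^2 ≤ ∑ k, (w k - wh k)^2 := by
      have := hsum_le {i, j}
      rwa [Finset.sum_pair hij] at this
    have hj2 : (w j - wh j)^2 = (wh j)^2 := by rw [hj]; ring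
    have habs := abs_sub_abs_le_abs_sub (w i) (wh i)
    have hqle : q ≤ |w i| := hq1 i hi
    have h1 : q ≤ |w i - wh i| + |wh j| := by linarith
    have h2 : q^2 ≤ (|w i - wh i| + |wh j|)^2 := by
      nlinarith [abs_nonneg (w i - wh i), abs_nonneg (wh j)]
    nlinarith [sq_abs (w i - wh i), sq_abs (wh j),
      sq_nonneg (|w i - wh i| - |wh j|), hpair]
  ext i
  simp only [spt, Finset.mem_filter, Finset.mem_univ, true_and]
  simp only [hardThr]
  constructor
  · intro hi
    by_contra hwi
    -- w i = 0, show hardThr s wh i = 0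

    have hsub : spt w ⊆ Finset.univ.filter (fun j => |wh j| > |wh i|) := by
      intro j hj
      simp only [spt, Finset.mem_filter, Finset.mem_univ, true_and] at hj ⊢
      exact key j i hj hwi
    have hcard : s ≤ (Finset.univ.filter (fun j => |wh j| > |wh i|)).card := by
      rw [← hs]; exact Finset.card_le_card hsub
    rw [if_neg (by omega)] at hi
    exact hi rfl
  · intro hi
    have hsub : (Finset.univ.filter (fun j => |wh j| > |wh i|)) ⊆ (spt w).erase i := by
      intro j hj
      simp only [Finset.mem_filter, Finset.mem_univ, true_and] at hj
      rw [Finset.mem_erase]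
      constructor
      · intro e; rw [e] at hj; exact lt_irrefl _ hj
      · simp only [spt, Finset.mem_filter, Finset.mem_univ, true_and]
        intro hwj
        exact absurd hj (not_lt.mpr (key i j hi hwj).le)
    have hipos : 0 < s := by
      rw [← hs]
      exact Finset.card_pos.mpr ⟨i, by simp [spt, hi]⟩
    have hcard : (Finset.univ.filter (fun j => |wh j| > |wh i|)).card < s := by
      have := Finset.card_le_card hsub
      have h2 : ((spt w).erase i).card = s - 1 := by
        rw [Finset.card_erase_of_mem (by simp [spt, hi]), hs]
      omega
    rw [if_pos hcard]
    exact hnz i hi
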